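/- Let v ∈ Ω_A^ω A be an ω-word and suppose v = v_i · ṽ_i is a factorization in the ω-word monoid for each i ≥ 1. Then there exist indices i < j such that v = v_j · ṽ_i. -/

import Mathlib

open Filter

/-- The ω-subalgebra of `M` generated by the alphabet: the smallest subset of `M`
containing `1` and the letters (via `f : A → M`) and closed under multiplication and
the ω-power `w`.  Its members are the ω-words. -/
inductive OmegaWord {A M : Type*} [Monoid M] (f : A → M) (w : M → M) : M → Prop
  | one : OmegaWord f w 1
  | letter (a : A) : OmegaWord f w (f a)
  | mul {u v : M} : OmegaWord f w u → OmegaWord f w v → OmegaWord f w (u * v)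
  | omega {u : M} : OmegaWord f w u → OmegaWord f w (w u)

section Aux

set_option linter.unusedSectionVars false

variable {M : Type*} [Monoid M] [TopologicalSpace M] [CompactSpace M] [T2Space M]

lemma aux_tmul (hcont : Continuous fun p : M × M => p.1 * p.2) {α : Type*} {l : Filter α}
    {f g : α → M} {p q : M} (hf : Tendsto f l (nhds p)) (hg : Tendsto g l (nhds q)) :
    Tendsto (fun x => f x * g x) l (nhds (p * q)) :=
  (hcont.tendsto (p, q)).comp (hf.prodMk_nhds hg)

lemma aux_labs (hcont : Continuous fun p : M × M => p.1 * p.2) (w : M → M)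
    (hlim : ∀ m : M, Tendsto (fun n : ℕ => m ^ (n + 1)) atTop (nhds (w m)))
    (u : M) (n : ℕ) : u ^ n * w u = w u := by
  have h1 : Tendsto (fun m : ℕ => u ^ (m + n + 1)) atTop (nhds (w u)) :=
    (hlim u).comp (tendsto_add_atTop_nat n)
  have h2 : Tendsto (fun m : ℕ => u ^ n * u ^ (m + 1)) atTop (nhds (u ^ n * w u)) :=
    aux_tmul hcont tendsto_const_nhds (hlim u)
  have he : (fun m : ℕ => u ^ n * u ^ (m + 1)) = fun m : ℕ => u ^ (m + n + 1) := by
    funext m; rw [← pow_add]; congr 1; omega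
  rw [he] at h2
  exact tendsto_nhds_unique h2 h1

lemma aux_rabs (hcont : Continuous fun p : M × M => p.1 * p.2) (w : M → M)
    (hlim : ∀ m : M, Tendsto (fun n : ℕ => m ^ (n + 1)) atTop (nhds (w m)))
    (u : M) (n : ℕ) : w u * u ^ n = w u := by
  have h1 : Tendsto (fun m : ℕ => u ^ (m + n + 1)) atTop (nhds (w u)) :=
    (hlim u).comp (tendsto_add_atTop_nat n)
  have h2 : Tendsto (fun m : ℕ => u ^ (m + 1) * u ^ n) atTop (nhds (w u * u ^ n)) :=
    aux_tmul hcont (hlim u) tendsto_const_nhds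
  have he : (fun m : ℕ => u ^ (m + 1) * u ^ n) = fun m : ℕ => u ^ (m + n + 1) := by
    funext m; rw [← pow_add]; congr 1; omega
  rw [he] at h2
  exact tendsto_nhds_unique h2 h1

lemma aux_powercut'
    (hequi : ∀ s t u v : M, s * t = u * v →
      ∃ z : M, (s = u * z ∧ z * t = v) ∨ (s * z = u ∧ t = z * v))
    (u : M) : ∀ (m : ℕ) (c d : M), c * d = u ^ (m + 1) →
      ∃ (k l : ℕ) (a b : M), a * b = u ∧ c = u ^ k * a ∧ d = b * u ^ l := by
  intro m
  induction m with
  | zero =>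
    intro c d hcd
    exact ⟨0, 0, c, d, by simpa using hcd, by simp, by simp⟩
  | succ m ih =>
    intro c d hcd
    have : c * d = u * u ^ (m + 1) := by rw [hcd, ← pow_succ']
    obtain ⟨z, hz | hz⟩ := hequi c d u (u ^ (m + 1)) this
    · obtain ⟨k, l, a, b, hab, hc, hd⟩ := ih z d hz.2
      exact ⟨k + 1, l, a, b, hab, by rw [hz.1, hc, ← mul_assoc, ← pow_succ'], hd⟩
    · exact ⟨0, m + 1, c, z, hz.1, by simp, hz.2⟩

lemma aux_FSL (hcont : Continuous fun p : M × M => p.1 * p.2)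
    (hopen : IsOpenMap fun p : M × M => p.1 * p.2)
    (hequi : ∀ s t u v : M, s * t = u * v →
      ∃ z : M, (s = u * z ∧ z * t = v) ∨ (s * z = u ∧ t = z * v))
    (w : M → M)
    (hlim : ∀ m : M, Tendsto (fun n : ℕ => m ^ (n + 1)) atTop (nhds (w m)))
    (u x y : M) (hxy : x * y = w u) :
    ∃ a b : M, a * b = u ∧ ((∃ k, x = u ^ k * a) ∨ x = w u * a) ∧
      ((∃ l, y = b * u ^ l) ∨ y = b * w u) := by
  classical
  set T : ℕ → Set (M × M) := fun N => {p | ∃ n, N ≤ n ∧ p.1 * p.2 = u ^ (n + 1)} with hT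
  have hmeets : ∀ N (V : Set (M × M)), (x, y) ∈ V ∧ IsOpen V → (V ∩ T N).Nonempty := by
    intro N V ⟨hxyV, hV⟩
    have hwuV : w u ∈ (fun p : M × M => p.1 * p.2) '' V := ⟨(x, y), hxyV, hxy⟩
    have hev : ∀ᶠ n in atTop, u ^ (n + 1) ∈ (fun p : M × M => p.1 * p.2) '' V :=
      (hlim u).eventually ((hopen V hV).eventually_mem hwuV)
    obtain ⟨N0, hN0⟩ := eventually_atTop.1 hev
    obtain ⟨p, hpV, hp⟩ := hN0 (max N N0) (le_max_right _ _)
    exact ⟨p, hpV, ⟨max N N0, le_max_left _ _, hp⟩⟩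
  have hdir : Directed (· ≥ ·) T := by
    intro a b
    refine ⟨max a b, fun p hp => ?_, fun p hp => ?_⟩ <;>
      · obtain ⟨n, hn, hpn⟩ := hp
        exact ⟨n, le_trans (by omega) hn, hpn⟩
  have hbasis : (⨅ N, Filter.principal (T N)).HasBasis (fun _ => True) T :=
    hasBasis_iInf_principal hdir
  have hne : NeBot (nhds (x, y) ⊓ ⨅ N, Filter.principal (T N)) := by
    rw [(nhds_basis_opens (x, y)).inf_basis_neBot_iff hbasis]
    intro V hV N _
    exact hmeets N V hV
  obtain ⟨U, hU⟩ := Filter.exists_ultrafilter_le (nhds (x, y) ⊓ ⨅ N, Filter.principal (T N))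
  have hUnhds : (U : Filter (M × M)) ≤ nhds (x, y) := hU.trans inf_le_left
  have hUT : ∀ N, T N ∈ U := by
    intro N
    have h1 : (nhds (x, y) ⊓ ⨅ N, Filter.principal (T N)) ≤ Filter.principal (T N) :=
      le_trans inf_le_right (iInf_le _ N)
    exact (hU.trans h1) (Filter.mem_principal_self _)
  have hch : ∀ p : M × M, ∃ (k l : ℕ) (a b : M), p ∈ T 0 →
      a * b = u ∧ p.1 = u ^ k * a ∧ p.2 = b * u ^ l := by
    intro p
    by_cases hp : p ∈ T 0
    · obtain ⟨n, -, hn⟩ := hp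
      obtain ⟨k, l, a, b, h1, h2, h3⟩ := aux_powercut' hequi u n p.1 p.2 hn
      exact ⟨k, l, a, b, fun _ => ⟨h1, h2, h3⟩⟩
    · exact ⟨0, 0, 1, 1, fun h => absurd h hp⟩
  choose K L a b hdec using hch
  haveI : Nonempty M := ⟨1⟩
  set a0 : M := (U.map a).lim with ha0def
  set b0 : M := (U.map b).lim with hb0def
  have ha : Tendsto a (U : Filter (M × M)) (nhds a0) := by
    have := (U.map a).le_nhds_lim
    rwa [Ultrafilter.coe_map] at this
  have hb : Tendsto b (U : Filter (M × M)) (nhds b0) := by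
    have := (U.map b).le_nhds_lim
    rwa [Ultrafilter.coe_map] at this
  have habu : a0 * b0 = u := by
    have h1 : Tendsto (fun p => a p * b p) (U : Filter (M × M)) (nhds (a0 * b0)) :=
      aux_tmul hcont ha hb
    have heq : (fun _ : M × M => u) =ᶠ[(U : Filter (M × M))] fun p => a p * b p := by
      filter_upwards [hUT 0] with p hp
      exact ((hdec p) hp).1.symm
    exact tendsto_nhds_unique h1 (Tendsto.congr' heq tendsto_const_nhds)
  have hfst : Tendsto (fun p : M × M => p.1) (U : Filter (M × M)) (nhds x) :=
    (continuous_fst.tendsto (x, y)).comp hUnhds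
  have hsnd : Tendsto (fun p : M × M => p.2) (U : Filter (M × M)) (nhds y) :=
    (continuous_snd.tendsto (x, y)).comp hUnhds
  have hunb : ∀ (g : M × M → ℕ), (¬ ∃ c, {p | g p = c} ∈ U) → ∀ N, {p | N ≤ g p} ∈ U := by
    intro g hg N
    induction N with
    | zero =>
      have : {p : M × M | 0 ≤ g p} = Set.univ := by ext p; simp
      rw [this]
      exact Filter.univ_mem
    | succ N ih =>
      have h1 : {p | g p ≠ N} ∈ U := by
        rw [show {p | g p ≠ N} = {p | g p = N}ᶜ from rfl, Ultrafilter.compl_mem_iff_notMem]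
        exact fun h => hg ⟨N, h⟩
      filter_upwards [ih, h1] with p h1 h2
      omega
  have hpowlim : ∀ (g : M × M → ℕ), (∀ N, {p | N ≤ g p} ∈ U) →
      Tendsto (fun p => u ^ g p) (U : Filter (M × M)) (nhds (w u)) := by
    intro g hg
    rw [Filter.tendsto_def]
    intro s hs
    have hmem : {n : ℕ | u ^ (n + 1) ∈ s} ∈ atTop := (hlim u) hs
    obtain ⟨N, hN⟩ := mem_atTop_sets.1 hmem
    apply Filter.mem_of_superset (hg (N + 1))
    intro p hp
    have h2 := hN (g p - 1) (by simp only [Set.mem_setOf_eq] at hp; omega)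
    simp only [Set.mem_setOf_eq] at hp h2 ⊢
    rwa [show g p - 1 + 1 = g p by omega] at h2
  have hxside : (∃ k, x = u ^ k * a0) ∨ x = w u * a0 := by
    by_cases hk : ∃ c, {p | K p = c} ∈ U
    · obtain ⟨c, hc⟩ := hk
      left
      refine ⟨c, tendsto_nhds_unique hfst ?_⟩
      have h1 : Tendsto (fun p => u ^ c * a p) (U : Filter (M × M)) (nhds (u ^ c * a0)) :=
        aux_tmul hcont tendsto_const_nhds ha
      refine Tendsto.congr' ?_ h1
      filter_upwards [hUT 0, hc] with p hp hpc
      rw [← hpc]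
      exact ((hdec p) hp).2.1.symm
    · right
      refine tendsto_nhds_unique hfst ?_
      have h1 : Tendsto (fun p => u ^ K p * a p) (U : Filter (M × M)) (nhds (w u * a0)) :=
        aux_tmul hcont (hpowlim K (hunb K hk)) ha
      refine Tendsto.congr' ?_ h1
      filter_upwards [hUT 0] with p hp
      exact ((hdec p) hp).2.1.symm
  have hyside : (∃ l, y = b0 * u ^ l) ∨ y = b0 * w u := by
    by_cases hl : ∃ c, {p | L p = c} ∈ U
    · obtain ⟨c, hc⟩ := hl
      left
      refine ⟨c, tendsto_nhds_unique hsnd ?_⟩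
      have h1 : Tendsto (fun p => b p * u ^ c) (U : Filter (M × M)) (nhds (b0 * u ^ c)) :=
        aux_tmul hcont hb tendsto_const_nhds
      refine Tendsto.congr' ?_ h1
      filter_upwards [hUT 0, hc] with p hp hpc
      rw [← hpc]
      exact ((hdec p) hp).2.2.symm
    · right
      refine tendsto_nhds_unique hsnd ?_
      have h1 : Tendsto (fun p => b p * u ^ L p) (U : Filter (M × M)) (nhds (b0 * w u)) :=
        aux_tmul hcont hb (hpowlim L (hunb L hl))
      refine Tendsto.congr' ?_ h1
      filter_upwards [hUT 0] with p hp
      exact ((hdec p) hp).2.2.symm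
  exact ⟨a0, b0, habu, hxside, hyside⟩

end Aux

lemma aux_pigeon {S T₁ T₂ : Set ℕ} (hS : S.Infinite) (hsub : S ⊆ T₁ ∪ T₂) :
    T₁.Infinite ∨ T₂.Infinite := by
  by_contra h
  push_neg at h
  exact hS ((h.1.union h.2).subset hsub)

lemma aux_mono (S : Set ℕ) (hS : S.Infinite) (g : ℕ → ℕ) :
    ∃ T : Set ℕ, T ⊆ S ∧ T.Infinite ∧ ∀ i ∈ T, ∀ j ∈ T, i ≤ j → g i ≤ g j := by
  have hS' : (setOf fun n => n ∈ S).Infinite := hS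
  set e : ℕ → ℕ := Nat.nth (fun n => n ∈ S) with he
  have hpwo : (Set.univ : Set ℕ).IsPWO := (Set.isWF_univ_iff.2 inferInstance).isPWO
  obtain ⟨φ, hφ⟩ := hpwo.exists_monotone_subseq (f := fun n => g (e n)) (fun n => Set.mem_univ _)
  refine ⟨Set.range (fun n => e (φ n)), ?_, ?_, ?_⟩
  · rintro _ ⟨n, rfl⟩
    exact Nat.nth_mem_of_infinite hS' _
  · apply Set.infinite_range_of_injective
    intro m n hmn
    exact φ.injective (Nat.nth_injective hS' hmn)
  · rintro _ ⟨m, rfl⟩ _ ⟨n, rfl⟩ hle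
    rcases eq_or_lt_of_le hle with heq | hlt
    · rw [heq]
    · have h1 : φ m < φ n := (Nat.nth_lt_nth hS').1 hlt
      exact hφ (le_of_lt (φ.lt_iff_lt.1 h1))

lemma aux_key {A M : Type*} [Monoid M] [TopologicalSpace M]
    [CompactSpace M] [T2Space M]
    (hcont : Continuous fun p : M × M => p.1 * p.2)
    (hopen : IsOpenMap fun p : M × M => p.1 * p.2)
    (hequi : ∀ s t u v : M, s * t = u * v →
      ∃ z : M, (s = u * z ∧ z * t = v) ∨ (s * z = u ∧ t = z * v))
    (f : A → M) (w : M → M)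
    (hidem : ∀ m : M, w m * w m = w m)
    (hlim : ∀ m : M, Tendsto (fun n : ℕ => m ^ (n + 1)) atTop (nhds (w m)))
    (hone : ∀ u v : M, u * v = 1 → u = 1 ∧ v = 1)
    (hletter : ∀ (a : A) (u v : M), u * v = f a → (u = 1 ∧ v = f a) ∨ (u = f a ∧ v = 1))
    {v : M} (hv : OmegaWord f w v) :
    ∀ S : Set ℕ, S.Infinite → ∀ xs ys : ℕ → M, (∀ i ∈ S, v = xs i * ys i) →
      ∃ i ∈ S, ∃ j ∈ S, i < j ∧ v = xs j * ys i := by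
  classical
  induction hv with
  | one =>
    intro S hS xs ys h
    obtain ⟨i, hi⟩ := hS.nonempty
    obtain ⟨j, hj, hij⟩ := hS.exists_gt i
    have h1 := hone _ _ (h i hi).symm
    have h2 := hone _ _ (h j hj).symm
    exact ⟨i, hi, j, hj, hij, by rw [h2.1, h1.2, one_mul]⟩
  | letter c =>
    intro S hS xs ys h
    have hcover : S ⊆ {i ∈ S | xs i = 1 ∧ ys i = f c} ∪ {i ∈ S | xs i = f c ∧ ys i = 1} := by
      intro i hi
      rcases hletter c _ _ (h i hi).symm with h' | h'
      · exact Or.inl ⟨hi, h'⟩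
      · exact Or.inr ⟨hi, h'⟩
    rcases aux_pigeon hS hcover with h1 | h1
    · obtain ⟨i, hi⟩ := h1.nonempty
      obtain ⟨j, hj, hij⟩ := h1.exists_gt i
      exact ⟨i, hi.1, j, hj.1, hij, by rw [hj.2.1, hi.2.2, one_mul]⟩
    · obtain ⟨i, hi⟩ := h1.nonempty
      obtain ⟨j, hj, hij⟩ := h1.exists_gt i
      exact ⟨i, hi.1, j, hj.1, hij, by rw [hj.2.1, hi.2.2, mul_one]⟩
  | @mul u₁ u₂ hu1 hu2 ih1 ih2 =>
    intro S hS xs ys h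
    have hch : ∀ i : ℕ, ∃ z : M, i ∈ S →
        ((xs i = u₁ * z ∧ z * ys i = u₂) ∨ (xs i * z = u₁ ∧ ys i = z * u₂)) := by
      intro i
      by_cases hi : i ∈ S
      · obtain ⟨z, hz⟩ := hequi (xs i) (ys i) u₁ u₂ (h i hi).symm
        exact ⟨z, fun _ => hz⟩
      · exact ⟨1, fun hc => absurd hc hi⟩
    choose z hz using hch
    have hcover : S ⊆ {i ∈ S | xs i = u₁ * z i ∧ z i * ys i = u₂} ∪
        {i ∈ S | xs i * z i = u₁ ∧ ys i = z i * u₂} := by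
      intro i hi
      rcases hz i hi with h' | h'
      · exact Or.inl ⟨hi, h'⟩
      · exact Or.inr ⟨hi, h'⟩
    rcases aux_pigeon hS hcover with h1 | h1
    · obtain ⟨i, hi, j, hj, hij, he⟩ := ih2 _ h1 z ys (fun i hi => hi.2.2.symm)
      exact ⟨i, hi.1, j, hj.1, hij, by rw [hj.2.1, mul_assoc, ← he]⟩
    · obtain ⟨i, hi, j, hj, hij, he⟩ := ih1 _ h1 xs z (fun i hi => hi.2.1.symm)
      exact ⟨i, hi.1, j, hj.1, hij, by rw [hi.2.2, ← mul_assoc, ← he]⟩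
  | @omega u hu ihu =>
    intro S hS xs ys h
    have huw : u * w u = w u := by
      have := aux_labs hcont w hlim u 1
      rwa [pow_one] at this
    have hch : ∀ i : ℕ, ∃ a b : M, i ∈ S →
        (a * b = u ∧ ((∃ k, xs i = u ^ k * a) ∨ xs i = w u * a) ∧
          ((∃ l, ys i = b * u ^ l) ∨ ys i = b * w u)) := by
      intro i
      by_cases hi : i ∈ S
      · obtain ⟨a, b, h1, h2, h3⟩ := aux_FSL hcont hopen hequi w hlim u (xs i) (ys i)
          (h i hi).symm
        exact ⟨a, b, fun _ => ⟨h1, h2, h3⟩⟩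
      · exact ⟨1, 1, fun hc => absurd hc hi⟩
    choose a b hdec using hch
    have hcover1 : S ⊆ {i ∈ S | ∃ k, xs i = u ^ k * a i} ∪ {i ∈ S | xs i = w u * a i} := by
      intro i hi
      rcases (hdec i hi).2.1 with h' | h'
      · exact Or.inl ⟨hi, h'⟩
      · exact Or.inr ⟨hi, h'⟩
    rcases aux_pigeon hS hcover1 with hx | hx
    · -- x side finite power
      have hcover2 : {i ∈ S | ∃ k, xs i = u ^ k * a i} ⊆
          {i ∈ {i ∈ S | ∃ k, xs i = u ^ k * a i} | ∃ l, ys i = b i * u ^ l} ∪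
          {i ∈ {i ∈ S | ∃ k, xs i = u ^ k * a i} | ys i = b i * w u} := by
        intro i hi
        rcases (hdec i hi.1).2.2 with h' | h'
        · exact Or.inl ⟨hi, h'⟩
        · exact Or.inr ⟨hi, h'⟩
      rcases aux_pigeon hx hcover2 with hy | hy
      · -- (fin, fin)
        set T0 := {i ∈ {i ∈ S | ∃ k, xs i = u ^ k * a i} | ∃ l, ys i = b i * u ^ l} with hT0
        have hkch : ∀ i : ℕ, ∃ k : ℕ, i ∈ T0 → xs i = u ^ k * a i := by
          intro i
          by_cases hi : i ∈ T0
          · obtain ⟨k, hk⟩ := hi.1.2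
            exact ⟨k, fun _ => hk⟩
          · exact ⟨0, fun hc => absurd hc hi⟩
        choose kk hkk using hkch
        have hlch : ∀ i : ℕ, ∃ l : ℕ, i ∈ T0 → ys i = b i * u ^ l := by
          intro i
          by_cases hi : i ∈ T0
          · obtain ⟨l, hl⟩ := hi.2
            exact ⟨l, fun _ => hl⟩
          · exact ⟨0, fun hc => absurd hc hi⟩
        choose ll hll using hlch
        obtain ⟨T, hTsub, hTinf, hTmono⟩ := aux_mono T0 hy kk
        have hTS : ∀ i ∈ T, i ∈ S := fun i hi => (hTsub hi).1.1
        obtain ⟨i, hi, j, hj, hij, hab⟩ := ihu T hTinf a b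
          (fun i hi => ((hdec i (hTS i hi)).1).symm)
        refine ⟨i, hTS i hi, j, hTS j hj, hij, ?_⟩
        have hxj : xs j = u ^ kk j * a j := hkk j (hTsub hj)
        have hyi : ys i = b i * u ^ ll i := hll i (hTsub hi)
        have hNi : w u = u ^ (kk i + (ll i + 1)) := by
          have hwi : w u = xs i * ys i := h i (hTS i hi)
          rw [hkk i (hTsub hi), hll i (hTsub hi)] at hwi
          calc w u = u ^ kk i * a i * (b i * u ^ ll i) := hwi
            _ = u ^ kk i * ((a i * b i) * u ^ ll i) := by simp [mul_assoc]
            _ = u ^ kk i * (u * u ^ ll i) := by rw [(hdec i (hTS i hi)).1]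
            _ = u ^ (kk i + (ll i + 1)) := by rw [← pow_succ', ← pow_add]
        have hkm : kk i ≤ kk j := hTmono i hi j hj (le_of_lt hij)
        calc w u = u ^ (kk j - kk i) * w u := (aux_labs hcont w hlim u _).symm
          _ = u ^ (kk j - kk i) * u ^ (kk i + (ll i + 1)) := by rw [← hNi]
          _ = u ^ (kk j + (ll i + 1)) := by rw [← pow_add]; congr 1; omega
          _ = u ^ kk j * (u * u ^ ll i) := by rw [← pow_succ', ← pow_add]
          _ = u ^ kk j * ((a j * b i) * u ^ ll i) := by rw [← hab]
          _ = u ^ kk j * a j * (b i * u ^ ll i) := by simp [mul_assoc]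
          _ = xs j * ys i := by rw [← hxj, ← hyi]
      · -- (fin, infinite)
        set T0 := {i ∈ {i ∈ S | ∃ k, xs i = u ^ k * a i} | ys i = b i * w u} with hT0
        have hT0S : ∀ i ∈ T0, i ∈ S := fun i hi => hi.1.1
        have hkch : ∀ i : ℕ, ∃ k : ℕ, i ∈ T0 → xs i = u ^ k * a i := by
          intro i
          by_cases hi : i ∈ T0
          · obtain ⟨k, hk⟩ := hi.1.2
            exact ⟨k, fun _ => hk⟩
          · exact ⟨0, fun hc => absurd hc hi⟩
        choose kk hkk using hkch
        obtain ⟨i, hi, j, hj, hij, hab⟩ := ihu T0 hy a b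
          (fun i hi => ((hdec i (hT0S i hi)).1).symm)
        refine ⟨i, hT0S i hi, j, hT0S j hj, hij, ?_⟩
        calc w u = u ^ kk j * w u := (aux_labs hcont w hlim u _).symm
          _ = u ^ kk j * (u * w u) := by rw [huw]
          _ = u ^ kk j * ((a j * b i) * w u) := by rw [← hab]
          _ = u ^ kk j * a j * (b i * w u) := by simp [mul_assoc]
          _ = xs j * ys i := by rw [← hkk j hj, ← hi.2]
    · -- x side infinite
      have hcover2 : {i ∈ S | xs i = w u * a i} ⊆
          {i ∈ {i ∈ S | xs i = w u * a i} | ∃ l, ys i = b i * u ^ l} ∪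
          {i ∈ {i ∈ S | xs i = w u * a i} | ys i = b i * w u} := by
        intro i hi
        rcases (hdec i hi.1).2.2 with h' | h'
        · exact Or.inl ⟨hi, h'⟩
        · exact Or.inr ⟨hi, h'⟩
      rcases aux_pigeon hx hcover2 with hy | hy
      · -- (infinite, fin)
        set T0 := {i ∈ {i ∈ S | xs i = w u * a i} | ∃ l, ys i = b i * u ^ l} with hT0
        have hT0S : ∀ i ∈ T0, i ∈ S := fun i hi => hi.1.1
        have hlch : ∀ i : ℕ, ∃ l : ℕ, i ∈ T0 → ys i = b i * u ^ l := by
          intro i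
          by_cases hi : i ∈ T0
          · obtain ⟨l, hl⟩ := hi.2
            exact ⟨l, fun _ => hl⟩
          · exact ⟨0, fun hc => absurd hc hi⟩
        choose ll hll using hlch
        obtain ⟨i, hi, j, hj, hij, hab⟩ := ihu T0 hy a b
          (fun i hi => ((hdec i (hT0S i hi)).1).symm)
        refine ⟨i, hT0S i hi, j, hT0S j hj, hij, ?_⟩
        calc w u = w u * u ^ (ll i + 1) := (aux_rabs hcont w hlim u _).symm
          _ = w u * (u * u ^ ll i) := by rw [← pow_succ']
          _ = w u * ((a j * b i) * u ^ ll i) := by rw [← hab]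
          _ = w u * a j * (b i * u ^ ll i) := by simp [mul_assoc]
          _ = xs j * ys i := by rw [← hj.1.2, ← hll i hi]
      · -- (infinite, infinite)
        set T0 := {i ∈ {i ∈ S | xs i = w u * a i} | ys i = b i * w u} with hT0
        have hT0S : ∀ i ∈ T0, i ∈ S := fun i hi => hi.1.1
        obtain ⟨i, hi, j, hj, hij, hab⟩ := ihu T0 hy a b
          (fun i hi => ((hdec i (hT0S i hi)).1).symm)
        refine ⟨i, hT0S i hi, j, hT0S j hj, hij, ?_⟩
        calc w u = w u * w u := (hidem u).symm
          _ = w u * (u * w u) := by rw [huw]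
          _ = w u * ((a j * b i) * w u) := by rw [← hab]
          _ = w u * a j * (b i * w u) := by simp [mul_assoc]
          _ = xs j * ys i := by rw [← hj.1.2, ← hi.2]

/-- Let `v` be an ω-word in the free profinite aperiodic monoid (axiomatized as below)
and suppose `v = vs i * vt i` is a factorization into ω-words for each `i ≥ 1`.
Then there exist indices `i < j` such that `v = vs j * vt i`. -/
theorem compatible_decompositions
    {A M : Type*} [Fintype A] [Monoid M] [TopologicalSpace M]
    [CompactSpace M] [T2Space M]
    (hcont : Continuous fun p : M × M => p.1 * p.2)
    (hopen : IsOpenMap fun p : M × M => p.1 * p.2)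
    (hequi : ∀ s t u v : M, s * t = u * v →
      ∃ z : M, (s = u * z ∧ z * t = v) ∨ (s * z = u ∧ t = z * v))
    (f : A → M) (w : M → M)
    (hidem : ∀ m : M, w m * w m = w m)
    (hlim : ∀ m : M, Tendsto (fun n : ℕ => m ^ (n + 1)) atTop (nhds (w m)))
    (huniq : ∀ m e : M, e * e = e → e ∈ closure {x : M | ∃ n : ℕ, x = m ^ (n + 1)} →
      e = w m)
    (hone : ∀ u v : M, u * v = 1 → u = 1 ∧ v = 1)
    (hletter : ∀ (a : A) (u v : M), u * v = f a → (u = 1 ∧ v = f a) ∨ (u = f a ∧ v = 1))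
    (v : M) (hv : OmegaWord f w v)
    (vs vt : ℕ → M)
    (hfact : ∀ i : ℕ, 1 ≤ i → OmegaWord f w (vs i) ∧ OmegaWord f w (vt i) ∧
      v = vs i * vt i) :
    ∃ i j : ℕ, 1 ≤ i ∧ i < j ∧ v = vs j * vt i := by
  have hSinf : {i : ℕ | 1 ≤ i}.Infinite :=
    Set.infinite_of_forall_exists_gt (fun a => ⟨a + 1, by simp, by omega⟩)
  obtain ⟨i, hi, j, hj, hij, he⟩ := aux_key hcont hopen hequi f w hidem hlim hone hletter hv
    {i : ℕ | 1 ≤ i} hSinf vs vt (fun i hi => (hfact i hi).2.2)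
  exact ⟨i, j, hi, hij, he⟩
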